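/- Suppose M ≥ 1. Let μ, ν be level-k restricted partitions and l_1 ∈ [0,k]. If r_1^{(α)} ≤ P^{(M)}_{μ,ν}[l_1]_α holds for every α with m_α(μ) ≥ 1 (in particular P^{(M)}_{μ,ν}[l_1]_α ≥ 0 for such α), then P^{(M)}_{μ,ν}[l_1]_k ≥ 0. -/
import Mathlib


/-- The vacancy number `P^{(M)}_{μ,ν}[l]_α = αM − (α−l)⁺ + Σ_β min(α,β)(n_β − 2m_β)`. -/
def Pvac (k M l : ℕ) (mu nu : ℕ → ℕ) (α : ℕ) : ℤ :=
  (α : ℤ) * M - max ((α : ℤ) - l) 0 +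
    ∑ β ∈ Finset.Icc 1 k, (min α β : ℤ) * ((nu β : ℤ) - 2 * (mu β : ℤ))

/-- suppose `M ≥ 1`, and `μ, ν` are level-`k` restricted partitions
(given by their multiplicity functions, supported on `[1,k]`), `0 ≤ l₁ ≤ k`, and `r`
is a rigging of `μ` whose top entries satisfy `r_1^{(α)} ≤ P^{(M)}_{μ,ν}[l₁]_α` for
every `α` with `m_α(μ) ≥ 1`.  Then `P^{(M)}_{μ,ν}[l₁]_k ≥ 0`. -/
theorem stmt14 (k M l1 : ℕ) (hM : 1 ≤ M) (hk : 1 ≤ k) (hl1 : l1 ≤ k)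
    (mu nu : ℕ → ℕ)
    (hmu : ∀ α, (α = 0 ∨ k < α) → mu α = 0) (hnu : ∀ α, (α = 0 ∨ k < α) → nu α = 0)
    (r : ℕ → ℕ)
    (hr : ∀ α ∈ Finset.Icc 1 k, 1 ≤ mu α → (r α : ℤ) ≤ Pvac k M l1 mu nu α) :
    0 ≤ Pvac k M l1 mu nu k := by
  have key : ∀ a : ℕ, a ≤ k → (∀ β ∈ Finset.Icc 1 k, a < β → mu β = 0) →
      Pvac k M l1 mu nu a ≤ Pvac k M l1 mu nu k := by
    intro a ha hz
    unfold Pvac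
    have hsum : ∑ β ∈ Finset.Icc 1 k, (min a β : ℤ) * ((nu β : ℤ) - 2 * (mu β : ℤ))
        ≤ ∑ β ∈ Finset.Icc 1 k, (min k β : ℤ) * ((nu β : ℤ) - 2 * (mu β : ℤ)) := by
      apply Finset.sum_le_sum
      intro β hβ
      rcases le_or_gt β a with h | h
      · have h1 : ((β:ℤ)) ≤ a := by exact_mod_cast h
        have h2 : ((β:ℤ)) ≤ k := by exact_mod_cast le_trans h ha
        rw [min_eq_right h1, min_eq_right h2]
      · have hm : mu β = 0 := hz β hβ h
        have hmin : ((a:ℤ) ⊓ (β:ℤ)) ≤ ((k:ℤ) ⊓ (β:ℤ)) := by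
          exact min_le_min (by exact_mod_cast ha) (le_refl _)
        have hn : (0:ℤ) ≤ (nu β : ℤ) - 2 * (mu β : ℤ) := by
          simp [hm]
        exact mul_le_mul_of_nonneg_right hmin hn
    have h1 : ((a:ℤ)) ≤ k := by exact_mod_cast ha
    have h2 : (1:ℤ) ≤ M := by exact_mod_cast hM
    have h3 : (l1:ℤ) ≤ k := by exact_mod_cast hl1
    have hlin : (a:ℤ)*M - max ((a:ℤ)-l1) 0 ≤ (k:ℤ)*M - max ((k:ℤ)-l1) 0 := by
      rcases le_total ((a:ℤ)) (l1:ℤ) with h | h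
      · rw [max_eq_right (by linarith), max_eq_left (by linarith)]
        nlinarith
      · rw [max_eq_left (by linarith), max_eq_left (by linarith)]
        nlinarith
    linarith
  by_cases hS : ∀ β ∈ Finset.Icc 1 k, mu β = 0
  · have h0 : Pvac k M l1 mu nu 0 = 0 := by
      simp [Pvac]
    have := key 0 (Nat.zero_le k) (fun β hβ _ => hS β hβ)
    linarith
  · push_neg at hS
    obtain ⟨β0, hβ0, hmβ0⟩ := hS
    set S := (Finset.Icc 1 k).filter (fun β => mu β ≠ 0) with hSdef
    have hne : S.Nonempty := ⟨β0, by simp [hSdef, hβ0, hmβ0]⟩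
    set a := S.max' hne with hadef
    have haS : a ∈ S := S.max'_mem hne
    have ha : a ∈ Finset.Icc 1 k := (Finset.mem_filter.mp haS).1
    have hma : mu a ≠ 0 := (Finset.mem_filter.mp haS).2
    have hP : (0:ℤ) ≤ Pvac k M l1 mu nu a :=
      le_trans (Int.natCast_nonneg _) (hr a ha (Nat.one_le_iff_ne_zero.mpr hma))
    have hz : ∀ β ∈ Finset.Icc 1 k, a < β → mu β = 0 := by
      intro β hβ hab
      by_contra h
      exact absurd (S.le_max' β (by simp [hSdef, hβ, h])) (not_le.mpr hab)
    exact le_trans hP (key a ((Finset.mem_Icc.mp ha).2) hz)
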